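/- Let K : ℝ → ℝ be continuous with K t < 0 for all t, and let f : ℝ → ℝ satisfy f'' + K·f = 0 with f 0 = 0 and f' 0 = -1. Then f' t < 0 for all t ∈ ℝ (in particular f' never vanishes). -/

import Mathlib

open Filter Set Topology

lemma jacobi_aux (K f : ℝ → ℝ)
    (hK : Continuous K) (hKneg : ∀ t, K t < 0)
    (hf : ContDiff ℝ 2 f)
    (hode : ∀ t, deriv (deriv f) t + K t * f t = 0)
    (h0 : f 0 = 0) (h0' : deriv f 0 = -1) :
    ∀ t, 0 ≤ t → deriv f t < 0 := by
  have hcont' : Continuous (deriv f) := hf.continuous_deriv one_le_two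
  have h1 : ContDiff ℝ 1 (deriv f) := by
    have h2 : ContDiff ℝ ((1:ℕ) + 1) f := by exact_mod_cast hf
    exact (contDiff_succ_iff_deriv.mp h2).2.2
  by_contra h
  push_neg at h
  obtain ⟨t₁, ht₁, ht₁'⟩ := h
  have hmem : (0:ℝ) ∈ Set.Icc (deriv f 0) (deriv f t₁) := by
    rw [h0']; constructor <;> linarith
  obtain ⟨z, hz, hz0⟩ := intermediate_value_Icc ht₁ hcont'.continuousOn hmem
  set S := {t : ℝ | 0 ≤ t ∧ deriv f t = 0} with hS
  have hSne : S.Nonempty := ⟨z, hz.1, hz0⟩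
  have hSbd : BddBelow S := ⟨0, fun x hx => hx.1⟩
  have hScl : IsClosed S := by
    have : S = Set.Ici 0 ∩ deriv f ⁻¹' {0} := by
      ext x; simp [hS, Set.mem_setOf_eq]
    rw [this]
    exact isClosed_Ici.inter (isClosed_singleton.preimage hcont')
  set T := sInf S with hT
  have hTS : T ∈ S := hScl.csInf_mem hSne hSbd
  have hT0 : 0 ≤ T := hTS.1
  have hT' : deriv f T = 0 := hTS.2
  have hTpos : 0 < T := by
    rcases lt_or_eq_of_le hT0 with h | h
    · exact h
    · exfalso; rw [← h] at hT'; rw [h0'] at hT'; norm_num at hT'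
  have hneg : ∀ s, 0 ≤ s → s < T → deriv f s < 0 := by
    intro s hs hsT
    rcases lt_trichotomy (deriv f s) 0 with h | h | h
    · exact h
    · exact absurd (csInf_le hSbd ⟨hs, h⟩) (not_le.mpr hsT)
    · have hmem2 : (0:ℝ) ∈ Set.Icc (deriv f 0) (deriv f s) := by
        rw [h0']; constructor <;> linarith
      obtain ⟨w, hw, hw0⟩ := intermediate_value_Icc hs hcont'.continuousOn hmem2
      exact absurd (csInf_le hSbd ⟨hw.1, hw0⟩)
        (not_le.mpr (lt_of_le_of_lt hw.2 hsT))
  have hanti : StrictAntiOn f (Set.Icc 0 T) := by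
    apply strictAntiOn_of_deriv_neg (convex_Icc 0 T) hf.continuous.continuousOn
    intro x hx
    rw [interior_Icc] at hx
    exact hneg x hx.1.le hx.2
  have hfT : f T < 0 := by
    have := hanti ⟨le_rfl, hT0⟩ ⟨hT0, le_rfl⟩ hTpos
    rwa [h0] at this
  have hfT'' : deriv (deriv f) T < 0 := by
    have := hode T
    nlinarith [hKneg T]
  have hdiff : DifferentiableAt ℝ (deriv f) T :=
    (h1.differentiable one_ne_zero).differentiableAt
  have hHD : HasDerivAt (deriv f) (deriv (deriv f) T) T := hdiff.hasDerivAt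
  rw [hasDerivAt_iff_tendsto_slope] at hHD
  have hmono : 𝓝[<] T ≤ 𝓝[≠] T :=
    nhdsWithin_mono T (fun x hx => ne_of_lt hx)
  have hev : ∀ᶠ s in 𝓝[<] T, slope (deriv f) T s < 0 :=
    (hHD.mono_left hmono).eventually (gt_mem_nhds hfT'')
  have hev2 : ∀ᶠ s in 𝓝[<] T, 0 < s :=
    (eventually_gt_nhds hTpos).filter_mono nhdsWithin_le_nhds
  have hev3 : ∀ᶠ s in 𝓝[<] T, s < T := eventually_mem_nhdsWithin
  obtain ⟨s, hs1, hs2, hs3⟩ := (hev.and (hev2.and hev3)).exists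
  have hfs : deriv f s < 0 := hneg s hs2.le hs3
  have hslope : 0 < slope (deriv f) T s := by
    rw [slope_def_field, hT']
    exact div_pos_of_neg_of_neg (by linarith) (by linarith)
  linarith

theorem jacobi_deriv_neg (K f : ℝ → ℝ)
    (hK : Continuous K) (hKneg : ∀ t, K t < 0)
    (hf : ContDiff ℝ 2 f)
    (hode : ∀ t, deriv (deriv f) t + K t * f t = 0)
    (h0 : f 0 = 0) (h0' : deriv f 0 = -1) :
    ∀ t, deriv f t < 0 := by
  intro t
  rcases le_or_gt 0 t with ht | ht
  · exact jacobi_aux K f hK hKneg hf hode h0 h0' t ht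
  · -- reflection: g s = -f (-s)
    set g : ℝ → ℝ := fun s => -f (-s) with hg
    set L : ℝ → ℝ := fun s => K (-s) with hL
    have hfd : Differentiable ℝ f := hf.differentiable two_ne_zero
    have h1 : ContDiff ℝ 1 (deriv f) := by
      have h2 : ContDiff ℝ ((1:ℕ) + 1) f := by exact_mod_cast hf
      exact (contDiff_succ_iff_deriv.mp h2).2.2
    have hgderiv : ∀ s, HasDerivAt g (deriv f (-s)) s := by
      intro s
      have h1' := (hfd (-s)).hasDerivAt
      have h2' := (h1'.comp s (hasDerivAt_neg s)).neg
      exact h2'.congr_deriv (by ring)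
    have hdg : deriv g = fun s => deriv f (-s) := by
      funext s; exact (hgderiv s).deriv
    have hgderiv2 : ∀ s, HasDerivAt (deriv g) (-(deriv (deriv f) (-s))) s := by
      intro s
      rw [hdg]
      have h1' := ((h1.differentiable one_ne_zero) (-s)).hasDerivAt
      have h2' := h1'.comp s (hasDerivAt_neg s)
      exact h2'.congr_deriv (by ring)
    have hcg : ContDiff ℝ 2 g := by
      exact (hf.comp (contDiff_neg.of_le le_top)).neg
    exact (by
      have := jacobi_aux L g (hK.comp continuous_neg) (fun s => hKneg (-s)) hcg
        (by
          intro s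
          have h2 := (hgderiv2 s).deriv
          have h3 := hode (-s)
          rw [h2]
          simp only [hg, hL]
          linarith)
        (by simp [hg, h0])
        (by rw [hdg]; simp [h0']) (-t) (by linarith)
      rw [hdg] at this
      simpa using this)
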